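/- arXiv:2510.15348 — 4 statements merged into one kernel-verified Lean document; each statement's English description precedes it below -/
import Mathlib

section
/- Let G and H be groups acting on an infinite set Ω. If G and H share the same orbits on the set Ω^(n) of pairwise-distinct n-tuples for some n ≥ 1, then for every s ≤ n they share the same orbits on Ω^(s). -/
/-- Any injective `s`-tuple in an infinite set extends to an injective `n`-tuple. -/
lemma exists_injective_extension {Ω : Type*} [Infinite Ω] {s n : ℕ} (hs : s ≤ n)
    (y : Fin s → Ω) (hy : Function.Injective y) :
    ∃ x : Fin n → Ω, Function.Injective x ∧ ∀ i : Fin s, x (Fin.castLE hs i) = y i := by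
  have hinf : (Set.range y)ᶜ.Infinite := (Set.finite_range y).infinite_compl
  haveI := hinf.to_subtype
  let e := Infinite.natEmbedding ((Set.range y)ᶜ : Set Ω)
  refine ⟨fun i => if h : (i : ℕ) < s then y ⟨i, h⟩ else (e ((i : ℕ) - s)).1, ?_, ?_⟩
  · intro i j hij
    by_cases hi : (i : ℕ) < s <;> by_cases hj : (j : ℕ) < s <;>
        simp only [hi, hj, dif_pos, dif_neg, not_false_iff] at hij
    · have h2 := hy hij
      have h3 := congrArg Fin.val h2
      exact Fin.ext h3
    · exact absurd ⟨_, hij⟩ (e ((j : ℕ) - s)).2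
    · exact absurd ⟨_, hij.symm⟩ (e ((i : ℕ) - s)).2
    · have := e.injective (Subtype.ext hij)
      have hi' : s ≤ (i : ℕ) := le_of_not_gt hi
      have hj' : s ≤ (j : ℕ) := le_of_not_gt hj
      exact Fin.ext (by omega)
  · intro i
    simp [Fin.castLE, i.isLt]

/-- If `G` and `H` share the same orbits on the set of pairwise-distinct `n`-tuples
of an infinite set `Ω` for some `n ≥ 1`, then for every `s ≤ n` they share the same
orbits on pairwise-distinct `s`-tuples. -/
theorem same_orbits_distinct_tuples_down {Ω G H : Type*} [Group G] [Group H]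
    [MulAction G Ω] [MulAction H Ω] [Infinite Ω] (n : ℕ) (hn : 1 ≤ n)
    (h : ∀ x : Fin n → Ω, Function.Injective x →
      MulAction.orbit G x = MulAction.orbit H x) :
    ∀ s ≤ n, ∀ y : Fin s → Ω, Function.Injective y →
      MulAction.orbit G y = MulAction.orbit H y := by
  intro s hs y hy
  obtain ⟨x, hxinj, hxy⟩ := exists_injective_extension hs y hy
  have hx := h x hxinj
  ext z
  constructor
  · rintro ⟨g, rfl⟩
    have hmem : (g • x) ∈ MulAction.orbit H x := by
      rw [← hx]; exact ⟨g, rfl⟩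
    obtain ⟨k, hk⟩ := hmem
    refine ⟨k, funext fun i => ?_⟩
    have := congrFun hk (Fin.castLE hs i)
    simpa [hxy i] using this
  · rintro ⟨k, rfl⟩
    have hmem : (k • x) ∈ MulAction.orbit G x := by
      rw [hx]; exact ⟨k, rfl⟩
    obtain ⟨g, hg⟩ := hmem
    refine ⟨g, funext fun i => ?_⟩
    have := congrFun hg (Fin.castLE hs i)
    simpa [hxy i] using this
end

section
/- Let G act oligomorphically on an infinite set Ω and let H be a subgroup of G. If for infinitely many n the number of H-orbits on Ω^(n) equals the number of G-orbits on Ω^(n), then G and H share the same orbits on every Ω^m. -/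
open MulAction Function

private lemma orbitH_subset {Ω G : Type*} [Group G] [MulAction G Ω] (H : Subgroup G)
    (x : Ω) : MulAction.orbit (↥H) x ⊆ MulAction.orbit G x := by
  rintro y ⟨h, rfl⟩
  exact ⟨(h : G), rfl⟩

private lemma exists_extension {Ω : Type*} [Infinite Ω] {m n : ℕ} (hmn : m ≤ n)
    (x : Fin m → Ω) (hx : Function.Injective x) :
    ∃ x' : Fin n → Ω, Function.Injective x' ∧ ∀ i : Fin m, x' (Fin.castLE hmn i) = x i := by
  classical
  have hS : (Set.range x)ᶜ.Infinite :=
    Set.Finite.infinite_compl (Set.finite_range x)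
  haveI := hS.to_subtype
  let e : Fin (n - m) ↪ ↥((Set.range x)ᶜ) :=
    Fin.valEmbedding.trans (Infinite.natEmbedding _)
  refine ⟨fun i => if h : (i : ℕ) < m then x ⟨i, h⟩ else
      (e ⟨(i : ℕ) - m, by omega⟩ : Ω), ?_, ?_⟩
  · intro i j hij
    dsimp only at hij
    split_ifs at hij with h1 h2 h2
    · have h3 := hx hij
      rw [Fin.mk.injEq] at h3
      exact Fin.ext h3
    · exact absurd (⟨_, hij⟩ : (e ⟨(j : ℕ) - m, by omega⟩ : Ω) ∈ Set.range x)
        (e ⟨(j : ℕ) - m, by omega⟩).2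
    · exact absurd (⟨_, hij.symm⟩ : (e ⟨(i : ℕ) - m, by omega⟩ : Ω) ∈ Set.range x)
        (e ⟨(i : ℕ) - m, by omega⟩).2
    · have h3 : (i : ℕ) - m = (j : ℕ) - m :=
        congrArg Fin.val (e.injective (Subtype.ext hij))
      exact Fin.ext (by omega)
  · intro i
    simp [Fin.castLE]

private lemma orbits_eq_of_card_eq {Ω G : Type*} [Group G] [MulAction G Ω] [Infinite Ω]
    (n : ℕ) [Finite (MulAction.orbitRel.Quotient G (Fin n → Ω))] (H : Subgroup G)
    (hc : Nat.card {s : Set (Fin n → Ω) |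
          ∃ x : Fin n → Ω, Function.Injective x ∧ s = MulAction.orbit G x} =
        Nat.card {s : Set (Fin n → Ω) |
          ∃ x : Fin n → Ω, Function.Injective x ∧ s = MulAction.orbit (↥H) x})
    (x : Fin n → Ω) (hx : Function.Injective x) :
    MulAction.orbit G x = MulAction.orbit (↥H) x := by
  classical
  set SG := {s : Set (Fin n → Ω) |
      ∃ x : Fin n → Ω, Function.Injective x ∧ s = MulAction.orbit G x} with hSG
  set SH := {s : Set (Fin n → Ω) |
      ∃ x : Fin n → Ω, Function.Injective x ∧ s = MulAction.orbit (↥H) x} with hSH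
  -- SG is finite
  haveI hfinSG : Finite ↥SG := by
    refine Finite.of_injective
      (fun s : ↥SG => (⟦Classical.choose s.2⟧ : MulAction.orbitRel.Quotient G (Fin n → Ω)))
      ?_
    rintro ⟨s, hs⟩ ⟨t, ht⟩ hst
    have h1 := (Classical.choose_spec hs).2
    have h2 := (Classical.choose_spec ht).2
    have : MulAction.orbit G (Classical.choose hs) = MulAction.orbit G (Classical.choose ht) := by
      have := Quotient.exact hst
      exact MulAction.orbit_eq_iff.mpr (MulAction.orbitRel_apply.mp this)
    apply Subtype.ext
    show s = t
    rw [h1, h2, this]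
  have hneSG : Nonempty ↥SG := ⟨⟨MulAction.orbit G x, x, hx, rfl⟩⟩
  have hposSG : Nat.card ↥SG ≠ 0 := Nat.pos_iff_ne_zero.mp Nat.card_pos
  haveI hfinSH : Finite ↥SH := (Nat.card_ne_zero.mp (hc ▸ hposSG)).2
  -- the natural surjection SH → SG
  let f : ↥SH → ↥SG := fun s =>
    ⟨MulAction.orbit G (Classical.choose s.2), Classical.choose s.2,
      (Classical.choose_spec s.2).1, rfl⟩
  have hfval : ∀ (y : Fin n → Ω) (hy : Function.Injective y),
      (f ⟨MulAction.orbit (↥H) y, ⟨y, hy, rfl⟩⟩ : Set (Fin n → Ω)) = MulAction.orbit G y := by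
    intro y hy
    have hmem : (MulAction.orbit (↥H) y : Set (Fin n → Ω)) ∈ SH := ⟨y, hy, rfl⟩
    have hspec := Classical.choose_spec hmem
    have hyz : y ∈ MulAction.orbit (↥H) (Classical.choose hmem) := by
      rw [← hspec.2]; exact MulAction.mem_orbit_self y
    have : y ∈ MulAction.orbit G (Classical.choose hmem) := orbitH_subset H _ hyz
    exact (MulAction.orbit_eq_iff.mpr this).symm
  have hfsurj : Function.Surjective f := by
    rintro ⟨s, y, hy, rfl⟩
    exact ⟨⟨MulAction.orbit (↥H) y, y, hy, rfl⟩, Subtype.ext (hfval y hy)⟩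
  haveI := Fintype.ofFinite ↥SG
  haveI := Fintype.ofFinite ↥SH
  have hcards : Fintype.card ↥SH = Fintype.card ↥SG := by
    rw [← Nat.card_eq_fintype_card, ← Nat.card_eq_fintype_card, hc]
  have hfbij : Function.Bijective f :=
    (Fintype.bijective_iff_surjective_and_card f).mpr ⟨hfsurj, hcards⟩
  -- now conclude
  refine Set.Subset.antisymm ?_ (orbitH_subset H x)
  intro y hy
  have hyinj : Function.Injective y := by
    obtain ⟨g, rfl⟩ := hy
    intro i j hij
    exact hx (smul_left_cancel g hij)
  have horb : MulAction.orbit G y = MulAction.orbit G x := MulAction.orbit_eq_iff.mpr hy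
  have : f ⟨MulAction.orbit (↥H) x, ⟨x, hx, rfl⟩⟩ = f ⟨MulAction.orbit (↥H) y, ⟨y, hyinj, rfl⟩⟩ := by
    apply Subtype.ext
    rw [hfval x hx, hfval y hyinj, horb]
  have := hfbij.1 this
  have hset : MulAction.orbit (↥H) x = MulAction.orbit (↥H) y := congrArg Subtype.val this
  rw [hset]
  exact MulAction.mem_orbit_self y

private lemma orbits_eq_inj_le {Ω G : Type*} [Group G] [MulAction G Ω] [Infinite Ω]
    {m n : ℕ} (hmn : m ≤ n) (H : Subgroup G)
    (hn : ∀ x : Fin n → Ω, Function.Injective x →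
      MulAction.orbit G x = MulAction.orbit (↥H) x)
    (x : Fin m → Ω) (hx : Function.Injective x) :
    MulAction.orbit G x = MulAction.orbit (↥H) x := by
  refine Set.Subset.antisymm ?_ (orbitH_subset H x)
  rintro y ⟨g, rfl⟩
  obtain ⟨x', hx', hext⟩ := exists_extension hmn x hx
  have : g • x' ∈ MulAction.orbit (↥H) x' := by
    rw [← hn x' hx']; exact ⟨g, rfl⟩
  obtain ⟨h, hh⟩ := this
  refine ⟨h, funext fun i => ?_⟩
  have := congrFun hh (Fin.castLE hmn i)
  simp only [Pi.smul_apply] at this ⊢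
  rw [← hext i, this, hext i]

/-- Let `G` act oligomorphically on an infinite set `Ω` and `H ≤ G`. If for
infinitely many `n` the number of `H`-orbits on pairwise-distinct `n`-tuples equals
the number of `G`-orbits, then `G` and `H` share the same orbits on every `Ω^m`. -/
theorem same_orbits_of_orbit_counts {Ω G : Type*} [Group G] [MulAction G Ω] [Infinite Ω]
    (holig : ∀ n : ℕ, Finite (MulAction.orbitRel.Quotient G (Fin n → Ω)))
    (H : Subgroup G)
    (hcard : ∀ N : ℕ, ∃ n ≥ N,
      Nat.card {s : Set (Fin n → Ω) |
          ∃ x : Fin n → Ω, Function.Injective x ∧ s = MulAction.orbit G x} =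
      Nat.card {s : Set (Fin n → Ω) |
          ∃ x : Fin n → Ω, Function.Injective x ∧ s = MulAction.orbit (↥H) x}) :
    ∀ (m : ℕ) (x : Fin m → Ω), MulAction.orbit G x = MulAction.orbit (↥H) x := by
  classical
  intro m x
  -- factor x through an injective tuple of its distinct values
  haveI : Fintype ↥(Set.range x) := Set.fintypeRange x
  set k := Fintype.card ↥(Set.range x) with hk
  let ek : ↥(Set.range x) ≃ Fin k := Fintype.equivFin _
  let xt : Fin k → Ω := fun j => (ek.symm j : Ω)
  have hxt : Function.Injective xt :=
    Subtype.val_injective.comp ek.symm.injective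
  let π : Fin m → Fin k := fun i => ek ⟨x i, Set.mem_range_self i⟩
  have hfac : ∀ i, xt (π i) = x i := by
    intro i
    simp [xt, π]
  -- get a level n ≥ k where the counts agree
  obtain ⟨n, hnk, hc⟩ := hcard k
  haveI := holig n
  have hninj : ∀ z : Fin n → Ω, Function.Injective z →
      MulAction.orbit G z = MulAction.orbit (↥H) z :=
    fun z hz => orbits_eq_of_card_eq n H hc z hz
  have hxt_orb : MulAction.orbit G xt = MulAction.orbit (↥H) xt :=
    orbits_eq_inj_le hnk H hninj xt hxt
  refine Set.Subset.antisymm ?_ (orbitH_subset H x)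
  rintro y ⟨g, rfl⟩
  have : g • xt ∈ MulAction.orbit (↥H) xt := by
    rw [← hxt_orb]; exact ⟨g, rfl⟩
  obtain ⟨h, hh⟩ := this
  refine ⟨h, funext fun i => ?_⟩
  have := congrFun hh (π i)
  simp only [Pi.smul_apply] at this ⊢
  rw [← hfac i, this, hfac i]
end

section
/- Let G act on an infinite set Ω and suppose for every finite Γ ⊆ Ω the pointwise stabilizer G_Γ has no fixed point in Ω \ Γ. Then for every finite Γ ⊆ Ω, the pointwise stabilizer G_Γ has no finite orbit contained in Ω \ Γ. -/
/-- If for every finite `Γ ⊆ Ω` the pointwise stabilizer `G_Γ` has no fixed point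
outside `Γ`, then `G_Γ` has no finite orbit outside `Γ`, i.e. every orbit of a
point outside `Γ` is infinite. -/
theorem orbit_infinite_of_no_fixed_points {Ω G : Type*} [Group G] [MulAction G Ω]
    [Infinite Ω]
    (h : ∀ (Γ : Finset Ω) (y : Ω), y ∉ Γ →
      ∃ g ∈ fixingSubgroup G (↑Γ : Set Ω), g • y ≠ y) :
    ∀ (Γ : Finset Ω) (y : Ω), y ∉ Γ →
      (MulAction.orbit (↥(fixingSubgroup G (↑Γ : Set Ω))) y).Infinite := by
  intro Γ y hy
  by_contra hfin
  rw [Set.not_infinite] at hfin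
  classical
  set Γ' : Finset Ω := Γ ∪ hfin.toFinset.erase y with hΓ'
  have hy' : y ∉ Γ' := by
    simp [hΓ', hy]
  obtain ⟨g, hg', hgy⟩ := h Γ' y hy'
  have hg : g ∈ fixingSubgroup G (↑Γ : Set Ω) := by
    rw [mem_fixingSubgroup_iff] at hg' ⊢
    intro x hx
    exact hg' x (by simp [hΓ', hx])
  have horb : g • y ∈ MulAction.orbit (↥(fixingSubgroup G (↑Γ : Set Ω))) y :=
    ⟨⟨g, hg⟩, rfl⟩
  have hmem : g • y ∈ Γ' := by
    simp only [hΓ', Finset.mem_union, Finset.mem_erase, Set.Finite.mem_toFinset]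
    exact Or.inr ⟨hgy, horb⟩
  have : g • (g • y) = g • y := by
    rw [mem_fixingSubgroup_iff] at hg'
    exact hg' (g • y) hmem
  exact hgy (smul_left_cancel g this)
end

section
/- Let Ω be an infinite set with a highly homogeneous action of G, let k be a commutative ring, and R = k[Ω] the polynomial ring with indeterminates Ω, with G acting by permuting variables. Then for every finite Γ ⊆ Ω, the ring of G_Γ-invariants of R is exactly k[Γ]. -/
section Aux

variable {Ω G : Type*} [Group G] [MulAction G Ω] [DecidableEq Ω]

/-- The set of points outside `Δ` fixed by the pointwise stabilizer of `Δ`. -/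
private def fixedPts (G : Type*) {Ω : Type*} [Group G] [MulAction G Ω] (Δ : Finset Ω) :
    Set Ω :=
  {y | y ∉ Δ ∧ ∀ g ∈ fixingSubgroup G (↑Δ : Set Ω), g • y = y}

private lemma fixedPts_finite [Infinite Ω]
    (hh : ∀ A B : Finset Ω, A.card = B.card → ∃ g : G, A.image (fun x => g • x) = B)
    (Δ : Finset Ω) : (fixedPts G Δ).Finite := by
  obtain ⟨y₀, hy₀⟩ := Infinite.exists_notMem_finset Δ
  have hcard : ∀ s : ↥(fixedPts G Δ),
      (insert y₀ Δ).card = (insert (s : Ω) Δ).card := by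
    intro s
    rw [Finset.card_insert_of_notMem hy₀, Finset.card_insert_of_notMem s.2.1]
  choose g hg using fun s : ↥(fixedPts G Δ) =>
    hh (insert y₀ Δ) (insert (s : Ω) Δ) (hcard s)
  set Φ : ↥(fixedPts G Δ) → (↥(insert y₀ Δ) → Option ↥Δ) :=
    fun s a => if h : g s • (a : Ω) ∈ Δ then some ⟨g s • (a : Ω), h⟩ else none with hΦ
  have hinj : Function.Injective Φ := by
    intro s t hst
    have hfix : (g t * (g s)⁻¹) ∈ fixingSubgroup G (↑Δ : Set Ω) := by
      rw [mem_fixingSubgroup_iff]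
      intro d hd
      have hd' : d ∈ Δ := hd
      have : d ∈ (insert y₀ Δ).image (fun x => g s • x) := by
        rw [hg s]; exact Finset.mem_insert_of_mem hd'
      obtain ⟨a, ha, hda⟩ := Finset.mem_image.mp this
      have h1 : Φ s ⟨a, ha⟩ = some ⟨d, hd'⟩ := by
        simp only [hΦ]
        rw [dif_pos (by rw [hda]; exact hd')]
        simp [hda]
      have h2 : Φ t ⟨a, ha⟩ = some ⟨d, hd'⟩ := by rw [← hst]; exact h1
      have h3 : g t • a = d := by
        simp only [hΦ] at h2
        by_cases hmem : g t • a ∈ Δ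
        · rw [dif_pos hmem] at h2
          exact congrArg Subtype.val (Option.some_injective _ h2)
        · rw [dif_neg hmem] at h2; exact absurd h2 (by simp)
      have h4 : (g s)⁻¹ • d = a := by rw [← hda, inv_smul_smul]
      rw [mul_smul, h4, h3]
    have hmove : (g t * (g s)⁻¹) • (s : Ω) = (t : Ω) := by
      have : (s : Ω) ∈ (insert y₀ Δ).image (fun x => g s • x) := by
        rw [hg s]; exact Finset.mem_insert_self _ _
      obtain ⟨a, ha, hsa⟩ := Finset.mem_image.mp this
      have h1 : Φ s ⟨a, ha⟩ = none := by
        simp only [hΦ]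
        rw [dif_neg (by rw [hsa]; exact s.2.1)]
      have h2 : Φ t ⟨a, ha⟩ = none := by rw [← hst]; exact h1
      have h3 : g t • a ∉ Δ := by
        simp only [hΦ] at h2
        by_cases hmem : g t • a ∈ Δ
        · rw [dif_pos hmem] at h2; exact absurd h2 (by simp)
        · exact hmem
      have h4 : g t • a ∈ insert (t : Ω) Δ := by
        rw [← hg t]; exact Finset.mem_image_of_mem _ ha
      have h5 : g t • a = (t : Ω) := by
        rcases Finset.mem_insert.mp h4 with h | h
        · exact h
        · exact absurd h h3
      have h6 : (g s)⁻¹ • (s : Ω) = a := by rw [← hsa, inv_smul_smul]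
      rw [mul_smul, h6, h5]
    have := s.2.2 _ hfix
    exact Subtype.ext (by rw [← this, hmove])
  have : Finite ↥(fixedPts G Δ) := Finite.of_injective Φ hinj
  exact Set.toFinite _

private lemma fixedPts_image (g : G) (Δ : Finset Ω) :
    fixedPts G (Δ.image (fun x => g • x)) = (fun y => g • y) '' fixedPts G Δ := by
  ext y
  constructor
  · rintro ⟨hy1, hy2⟩
    refine ⟨g⁻¹ • y, ⟨?_, ?_⟩, smul_inv_smul g y⟩
    · intro hmem
      exact hy1 (by
        have : g • (g⁻¹ • y) ∈ Δ.image (fun x => g • x) := Finset.mem_image_of_mem _ hmem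
        rwa [smul_inv_smul] at this)
    · intro h hh'
      have hmem : (g * h * g⁻¹) ∈ fixingSubgroup G (↑(Δ.image (fun x => g • x)) : Set Ω) := by
        rw [mem_fixingSubgroup_iff]
        intro d hd
        obtain ⟨e, he, hde⟩ := Finset.mem_image.mp hd
        have he' : h • e = e := (mem_fixingSubgroup_iff G).mp hh' e he
        rw [← hde, mul_smul, mul_smul, inv_smul_smul, he']
      have := hy2 _ hmem
      rw [mul_smul, mul_smul] at this
      calc h • g⁻¹ • y = g⁻¹ • g • h • g⁻¹ • y := by rw [inv_smul_smul]
        _ = g⁻¹ • y := by rw [this]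
  · rintro ⟨z, ⟨hz1, hz2⟩, rfl⟩
    constructor
    · intro hmem
      obtain ⟨e, he, hde⟩ := Finset.mem_image.mp hmem
      exact hz1 ((MulAction.injective g hde) ▸ he)
    · intro h hhin
      have hmem : (g⁻¹ * h * g) ∈ fixingSubgroup G (↑Δ : Set Ω) := by
        rw [mem_fixingSubgroup_iff]
        intro e he
        have : h • (g • e) = g • e := (mem_fixingSubgroup_iff G).mp hhin (g • e)
          (Finset.mem_coe.mpr (Finset.mem_image_of_mem _ he))
        rw [mul_smul, mul_smul, this, inv_smul_smul]
      have := hz2 _ hmem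
      rw [mul_smul, mul_smul] at this
      calc h • g • z = g • g⁻¹ • h • g • z := by rw [smul_inv_smul]
        _ = g • z := by rw [this]

private lemma exists_smul_ne [Infinite Ω]
    (hh : ∀ A B : Finset Ω, A.card = B.card → ∃ g : G, A.image (fun x => g • x) = B)
    (Δ : Finset Ω) {x : Ω} (hx : x ∉ Δ) :
    ∃ g ∈ fixingSubgroup G (↑Δ : Set Ω), g • x ≠ x := by
  by_contra hcon
  push_neg at hcon
  have hxF : x ∈ fixedPts G Δ := ⟨hx, hcon⟩
  have hfin : (fixedPts G Δ).Finite := fixedPts_finite hh Δ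
  obtain ⟨w, hw⟩ := ((Δ.finite_toSet.union hfin).infinite_compl).nonempty
  simp only [Set.mem_compl_iff, Set.mem_union, not_or, Finset.mem_coe] at hw
  obtain ⟨hwΔ, hwF⟩ := hw
  have hcard : (insert x Δ).card = (insert w Δ).card := by
    rw [Finset.card_insert_of_notMem hx, Finset.card_insert_of_notMem hwΔ]
  obtain ⟨g, hg⟩ := hh (insert x Δ) (insert w Δ) hcard
  have key1 : fixingSubgroup G (↑(insert x Δ) : Set Ω) = fixingSubgroup G (↑Δ : Set Ω) := by
    apply le_antisymm
    · intro h hmem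
      rw [mem_fixingSubgroup_iff] at hmem ⊢
      intro y hy
      exact hmem y (Finset.mem_coe.mpr (Finset.mem_insert_of_mem hy))
    · intro h hmem
      rw [mem_fixingSubgroup_iff]
      intro y hy
      rcases Finset.mem_insert.mp hy with rfl | hy'
      · exact hcon h hmem
      · exact (mem_fixingSubgroup_iff G).mp hmem y hy'
  have key2 : fixedPts G (insert x Δ) = fixedPts G Δ \ {x} := by
    ext y
    simp only [fixedPts, Set.mem_setOf_eq, Set.mem_diff, Set.mem_singleton_iff,
      Finset.mem_insert, not_or, key1]
    tauto
  have key3 : fixedPts G (insert w Δ) = (fun y => g • y) '' (fixedPts G Δ \ {x}) := by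
    rw [← key2, ← fixedPts_image, hg]
  have hsub : fixedPts G Δ ⊆ fixedPts G (insert w Δ) := by
    rintro y ⟨hy1, hy2⟩
    refine ⟨?_, ?_⟩
    · intro hmem
      rcases Finset.mem_insert.mp hmem with rfl | h
      · exact hwF ⟨hy1, hy2⟩
      · exact hy1 h
    · intro h hmem
      apply hy2
      rw [mem_fixingSubgroup_iff] at hmem ⊢
      intro z hz
      exact hmem z (Finset.mem_coe.mpr (Finset.mem_insert_of_mem hz))
  have hfin2 : (fixedPts G (insert w Δ)).Finite := fixedPts_finite hh _
  have h1 : (fixedPts G (insert w Δ)).ncard = (fixedPts G Δ).ncard - 1 := by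
    rw [key3, Set.ncard_image_of_injective _ (MulAction.injective g),
      Set.ncard_diff_singleton_of_mem hxF]
  have h2 : (fixedPts G Δ).ncard ≤ (fixedPts G Δ).ncard - 1 :=
    (Set.ncard_le_ncard hsub hfin2).trans_eq h1
  have h3 : 0 < (fixedPts G Δ).ncard := (Set.ncard_pos hfin).mpr ⟨x, hxF⟩
  omega

end Aux

/-- Let `G` act highly homogeneously on an infinite set `Ω` and `k` be a commutative
ring. For every finite `Γ ⊆ Ω`, the `G_Γ`-invariants of the polynomial ring
`k[Ω]` are exactly `k[Γ]`. -/
theorem invariants_eq_supported {Ω G : Type*} [Group G] [MulAction G Ω] [Infinite Ω]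
    [DecidableEq Ω] {k : Type*} [CommRing k]
    (hh : ∀ A B : Finset Ω, A.card = B.card →
      ∃ g : G, A.image (fun x => g • x) = B)
    (Γ : Finset Ω) :
    {P : MvPolynomial Ω k | ∀ g ∈ fixingSubgroup G (↑Γ : Set Ω),
        MvPolynomial.rename (fun x : Ω => g • x) P = P} =
      (MvPolynomial.supported k (↑Γ : Set Ω) : Set (MvPolynomial Ω k)) := by
  ext P
  simp only [Set.mem_setOf_eq, SetLike.mem_coe]
  constructor
  · intro hP
    rw [MvPolynomial.mem_supported]
    intro x hxvars
    have hxv : x ∈ P.vars := hxvars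
    by_contra hxΓ
    have hxΓ' : x ∉ Γ := fun h => hxΓ (Finset.mem_coe.mpr h)
    set Δ : Finset Ω := Γ ∪ (P.vars \ {x}) with hΔ
    have hxΔ : x ∉ Δ := by simp [hΔ, hxΓ']
    obtain ⟨g, hgfix, hgx⟩ := exists_smul_ne hh Δ hxΔ
    apply hgx
    have hgΓ : g ∈ fixingSubgroup G (↑Γ : Set Ω) := by
      rw [mem_fixingSubgroup_iff]
      intro y hy
      exact (mem_fixingSubgroup_iff G).mp hgfix y
        (Finset.mem_coe.mpr (Finset.mem_union_left _ hy))
    have hren := hP g hgΓ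
    have hvars : P.vars = P.vars.image (fun z => g • z) := by
      apply Finset.eq_of_subset_of_card_le
      · conv_lhs => rw [← hren]
        exact MvPolynomial.vars_rename _ P
      · exact Finset.card_image_le
    have hgxv : g • x ∈ P.vars := by
      rw [hvars]; exact Finset.mem_image_of_mem _ hxv
    by_contra hne
    have hgxΔ : g • x ∈ Δ := by
      simp only [hΔ, Finset.mem_union, Finset.mem_sdiff, Finset.mem_singleton]
      exact Or.inr ⟨hgxv, hne⟩
    have := (mem_fixingSubgroup_iff G).mp hgfix (g • x) (Finset.mem_coe.mpr hgxΔ)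
    exact hne (MulAction.injective g this)
  · intro hP g hg
    rw [MvPolynomial.supported_eq_range_rename] at hP
    obtain ⟨Q, hQ⟩ := hP
    have hQ' : MvPolynomial.rename (Subtype.val) Q = P := hQ
    rw [← hQ', MvPolynomial.rename_rename]
    have hfun : ((fun x : Ω => g • x) ∘ (Subtype.val : (↑Γ : Set Ω) → Ω)) = Subtype.val := by
      funext a
      exact (mem_fixingSubgroup_iff G).mp hg (a : Ω) a.2
    rw [hfun]
end
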